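/- Let m > n ≥ 1 be distinct positive integers such that neither m/n nor n/m is a power of a prime (i.e. m/n is not of the form p^r with p prime and r a nonzero integer). Then the resultant of the cyclotomic polynomials Φ_m and Φ_n equals ±1. -/

import Mathlib

set_option maxHeartbeats 1000000

open Polynomial Matrix

/-- General Sylvester-shaped matrix with explicit degrees. -/
def sylvAux (R : Type*) [CommRing R] (dp dq : ℕ) (p q : R[X]) :
    Matrix (Fin (dq + dp)) (Fin (dq + dp)) R :=
  Matrix.of fun i j =>
    if (i : ℕ) < dq then
      (if (j : ℕ) ≤ dp + (i : ℕ) then p.coeff (dp + (i : ℕ) - (j : ℕ)) else 0)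
    else
      (if (j : ℕ) ≤ dq + ((i : ℕ) - dq) then q.coeff (dq + ((i : ℕ) - dq) - (j : ℕ)) else 0)

lemma coeff_C_mul_X_pow_mul {R : Type*} [CommRing R] (c : R) (k : ℕ) (p : R[X]) (e : ℕ) :
    (C c * X ^ k * p).coeff e = if k ≤ e then c * p.coeff (e - k) else 0 := by
  rw [show C c * X ^ k * p = (C c * p) * X ^ k by ring, coeff_mul_X_pow']
  split_ifs with h
  · rw [coeff_C_mul]
  · rfl

section Field
variable {F : Type*} [Field F]

lemma sylvAux_det_ne_zero {dp dq : ℕ} (hdp : 0 < dp) (hdq : 0 < dq)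
    {P Q : F[X]} (hP : P.Monic) (hQ : Q.Monic)
    (hPd : P.natDegree = dp) (hQd : Q.natDegree = dq)
    (hco : IsCoprime P Q) : (sylvAux F dp dq P Q).det ≠ 0 := by
  intro hdet
  obtain ⟨v, hv0, hv⟩ := Matrix.exists_vecMul_eq_zero_iff.mpr hdet
  set a : F[X] := ∑ i : Fin dq, C (v ⟨i.1, by omega⟩) * X ^ (dq - 1 - i.1) with ha
  set b : F[X] := ∑ i : Fin dp, C (v ⟨dq + i.1, by omega⟩) * X ^ (dp - 1 - i.1) with hb
  have hvM : ∀ j : Fin (dq + dp), (∑ i, v i * sylvAux F dp dq P Q i j) = 0 := by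
    intro j
    have := congrFun hv j
    simpa [Matrix.vecMul, dotProduct] using this
  have haP : ∀ e : ℕ, (a * P).coeff e =
      ∑ i : Fin dq, (if dq - 1 - i.1 ≤ e then v ⟨i.1, by omega⟩ * P.coeff (e - (dq - 1 - i.1)) else 0) := by
    intro e
    rw [ha, Finset.sum_mul, finset_sum_coeff]
    refine Finset.sum_congr rfl fun i _ => ?_
    rw [coeff_C_mul_X_pow_mul]
  have hbQ : ∀ e : ℕ, (b * Q).coeff e =
      ∑ i : Fin dp, (if dp - 1 - i.1 ≤ e then v ⟨dq + i.1, by omega⟩ * Q.coeff (e - (dp - 1 - i.1)) else 0) := by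
    intro e
    rw [hb, Finset.sum_mul, finset_sum_coeff]
    refine Finset.sum_congr rfl fun i _ => ?_
    rw [coeff_C_mul_X_pow_mul]
  have key : a * P + b * Q = 0 := by
    ext k
    rw [coeff_add, coeff_zero, haP, hbQ]
    by_cases hk : k < dq + dp
    · set j : Fin (dq + dp) := ⟨dq + dp - 1 - k, by omega⟩ with hj
      have := hvM j
      rw [Fin.sum_univ_add] at this
      have e1 : (∑ i : Fin dq, if dq - 1 - i.1 ≤ k then v ⟨i.1, by omega⟩ * P.coeff (k - (dq - 1 - i.1)) else 0)
          = ∑ i : Fin dq, v (Fin.castAdd dp i) * sylvAux F dp dq P Q (Fin.castAdd dp i) j := by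
        refine Finset.sum_congr rfl fun i _ => ?_
        have hi := i.2
        simp only [sylvAux, Fin.coe_castAdd, Matrix.of_apply, hj]
        rw [if_pos (by omega : (i : ℕ) < dq), mul_ite, mul_zero]
        by_cases hc : dq - 1 - i.1 ≤ k
        · rw [if_pos hc, if_pos (by omega : dq + dp - 1 - k ≤ dp + i.1),
            show k - (dq - 1 - i.1) = dp + i.1 - (dq + dp - 1 - k) by omega]
          first
          | rfl
          | exact congrArg (fun z => z * _) (congrArg v (Fin.ext rfl))
        · rw [if_neg hc, if_neg (by omega : ¬ (dq + dp - 1 - k ≤ dp + i.1))]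
      have e2 : (∑ i : Fin dp, if dp - 1 - i.1 ≤ k then v ⟨dq + i.1, by omega⟩ * Q.coeff (k - (dp - 1 - i.1)) else 0)
          = ∑ i : Fin dp, v (Fin.natAdd dq i) * sylvAux F dp dq P Q (Fin.natAdd dq i) j := by
        refine Finset.sum_congr rfl fun i _ => ?_
        have hi := i.2
        simp only [sylvAux, Fin.coe_natAdd, Matrix.of_apply, hj]
        rw [if_neg (by omega : ¬ (dq + i.1 < dq)), show dq + i.1 - dq = i.1 by omega,
          mul_ite, mul_zero]
        by_cases hc : dp - 1 - i.1 ≤ k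
        · rw [if_pos hc, if_pos (by omega : dq + dp - 1 - k ≤ dq + i.1),
            show k - (dp - 1 - i.1) = dq + i.1 - (dq + dp - 1 - k) by omega]
          first
          | rfl
          | exact congrArg (fun z => z * _) (congrArg v (Fin.ext rfl))
        · rw [if_neg hc, if_neg (by omega : ¬ (dq + dp - 1 - k ≤ dq + i.1))]
      rw [e1, e2]
      exact this
    · rw [show (0:F) = 0 + 0 by ring]
      congr 1
      · refine Finset.sum_eq_zero fun i _ => ?_
        have hi := i.2
        rw [if_pos (by omega), coeff_eq_zero_of_natDegree_lt (by omega : P.natDegree < k - (dq - 1 - i.1)), mul_zero]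
      · refine Finset.sum_eq_zero fun i _ => ?_
        have hi := i.2
        rw [if_pos (by omega), coeff_eq_zero_of_natDegree_lt (by omega : Q.natDegree < k - (dp - 1 - i.1)), mul_zero]
  -- degree bounds
  have hadeg : a.degree < (dq : ℕ) := by
    rw [ha]
    refine lt_of_le_of_lt (Polynomial.degree_sum_le _ _) ?_
    rw [Finset.sup_lt_iff (by exact_mod_cast WithBot.bot_lt_coe dq)]
    intro i _
    refine lt_of_le_of_lt (degree_C_mul_X_pow_le _ _) ?_
    exact_mod_cast Nat.lt_of_le_of_lt (by omega : dq - 1 - i.1 ≤ dq - 1) (by omega)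
  have hQdvd : Q ∣ a * P := ⟨-b, by linear_combination key⟩
  have ha0 : a = 0 := by
    refine Polynomial.eq_zero_of_dvd_of_degree_lt (hco.symm.dvd_of_dvd_mul_right hQdvd) ?_
    rwa [degree_eq_natDegree hQ.ne_zero, hQd]
  have hb0 : b = 0 := by
    have : b * Q = 0 := by rw [ha0, zero_mul, zero_add] at key; exact key
    rcases mul_eq_zero.mp this with h | h
    · exact h
    · exact absurd h hQ.ne_zero
  apply hv0
  funext i
  rcases lt_or_ge (i : ℕ) dq with hi | hi
  · have : a.coeff (dq - 1 - i.1) = v i := by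
      rw [ha, finset_sum_coeff]
      rw [Finset.sum_eq_single (⟨i.1, hi⟩ : Fin dq)]
      · simp only [coeff_C_mul, coeff_X_pow]
        rw [if_pos trivial, mul_one]
      · intro i' _ hne
        simp only [coeff_C_mul, coeff_X_pow]
        rw [if_neg, mul_zero]
        intro hEq
        have h1 : i'.1 < dq := i'.2
        have h2 : ((⟨i.1, hi⟩ : Fin dq) : ℕ) = i.1 := rfl
        exact hne (Fin.ext (by rw [h2] at hEq; omega))
      · intro habs; exact absurd (Finset.mem_univ _) habs
    rw [ha0] at this
    simp only [coeff_zero] at this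
    exact this.symm
  · have : b.coeff (dp - 1 - (i.1 - dq)) = v i := by
      rw [hb, finset_sum_coeff]
      rw [Finset.sum_eq_single (⟨i.1 - dq, by have := i.2; omega⟩ : Fin dp)]
      · simp only [coeff_C_mul, coeff_X_pow]
        rw [if_pos trivial, mul_one]
        exact congrArg v (Fin.ext (by simp only [Fin.val_mk]; omega))
      · intro i' _ hne
        simp only [coeff_C_mul, coeff_X_pow]
        rw [if_neg, mul_zero]
        intro hEq
        have h1 : i'.1 < dp := i'.2
        have h3 := i.2
        refine hne (Fin.ext ?_)
        show i'.1 = i.1 - dq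
        omega
      · intro habs; exact absurd (Finset.mem_univ _) habs
    rw [hb0] at this
    simp only [coeff_zero] at this
    exact this.symm

end Field

lemma cyclotomic_coprime_zmod (p : ℕ) [Fact p.Prime] {m n : ℕ} (hm : 0 < m) (hn : 0 < n)
    (hmn : m ≠ n)
    (h : ∀ q r : ℕ, q.Prime → 0 < r → m ≠ n * q ^ r ∧ n ≠ m * q ^ r) :
    IsCoprime (cyclotomic m (ZMod p)) (cyclotomic n (ZMod p)) := by
  have pp := (Fact.out : p.Prime)
  apply (Polynomial.isCoprime_iff_aeval_ne_zero_of_isAlgClosed (k := ZMod p) (AlgebraicClosure (ZMod p)) (cyclotomic m (ZMod p)) (cyclotomic n (ZMod p))).mpr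
  intro μ
  by_contra hc
  push_neg at hc
  obtain ⟨h1, h2⟩ := hc
  haveI : CharP (AlgebraicClosure (ZMod p)) p := charP_of_injective_algebraMap
    (RingHom.injective (algebraMap (ZMod p) (AlgebraicClosure (ZMod p)))) p
  set a := m.factorization p with hA
  set b := n.factorization p with hB
  set m' := m / p ^ a with hm'd
  set n' := n / p ^ b with hn'd
  have hmm : p ^ a * m' = m := Nat.ordProj_mul_ordCompl_eq_self m p
  have hnn : p ^ b * n' = n := Nat.ordProj_mul_ordCompl_eq_self n p
  have hm'nd : ¬ p ∣ m' := Nat.not_dvd_ordCompl pp hm.ne'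
  have hn'nd : ¬ p ∣ n' := Nat.not_dvd_ordCompl pp hn.ne'
  haveI : NeZero ((m' : AlgebraicClosure (ZMod p))) := ⟨by
    rw [Ne, CharP.cast_eq_zero_iff (AlgebraicClosure (ZMod p)) p]; exact hm'nd⟩
  haveI : NeZero ((n' : AlgebraicClosure (ZMod p))) := ⟨by
    rw [Ne, CharP.cast_eq_zero_iff (AlgebraicClosure (ZMod p)) p]; exact hn'nd⟩
  have r1 : IsRoot (cyclotomic m (AlgebraicClosure (ZMod p))) μ := by
    rwa [IsRoot.def, ← map_cyclotomic _ (algebraMap (ZMod p) (AlgebraicClosure (ZMod p))), eval_map,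
      ← aeval_def]
  have r2 : IsRoot (cyclotomic n (AlgebraicClosure (ZMod p))) μ := by
    rwa [IsRoot.def, ← map_cyclotomic _ (algebraMap (ZMod p) (AlgebraicClosure (ZMod p))), eval_map,
      ← aeval_def]
  rw [← hmm, isRoot_cyclotomic_prime_pow_mul_iff_of_charP] at r1
  rw [← hnn, isRoot_cyclotomic_prime_pow_mul_iff_of_charP] at r2
  have hmn' : m' = n' := r1.unique r2
  have hab : a ≠ b := by
    intro hEq; exact hmn (by rw [← hmm, ← hnn, hEq, hmn'])
  rcases Nat.lt_or_ge a b with hlt | hge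
  · refine (h p (b - a) pp (by omega)).2 ?_
    rw [← hmm, ← hnn, hmn']
    have : p ^ b = p ^ a * p ^ (b - a) := by rw [← pow_add]; congr 1; omega
    rw [this]; ring
  · refine (h p (a - b) pp (by omega)).1 ?_
    rw [← hmm, ← hnn, hmn']
    have : p ^ a = p ^ b * p ^ (a - b) := by rw [← pow_add]; congr 1; omega
    rw [this]; ring

lemma sylvAux_map {R S : Type*} [CommRing R] [CommRing S] (f : R →+* S) (dp dq : ℕ)
    (p q : R[X]) :
    (sylvAux R dp dq p q).map f = sylvAux S dp dq (p.map f) (q.map f) := by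
  ext i j
  simp only [sylvAux, Matrix.map_apply, Matrix.of_apply, coeff_map]
  split_ifs <;> simp [coeff_map]

/-- The Sylvester matrix of two integer polynomials `p`, `q` (with respect to their
natural degrees): the first `q.natDegree` rows contain shifted coefficient vectors of `p`,
the remaining `p.natDegree` rows contain shifted coefficient vectors of `q`. -/
noncomputable def sylvesterMatrix (p q : Polynomial ℤ) :
    Matrix (Fin (q.natDegree + p.natDegree)) (Fin (q.natDegree + p.natDegree)) ℤ :=
  Matrix.of fun i j =>
    if (i : ℕ) < q.natDegree then
      (if (j : ℕ) ≤ p.natDegree + (i : ℕ) then p.coeff (p.natDegree + (i : ℕ) - (j : ℕ)) else 0)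
    else
      (if (j : ℕ) ≤ q.natDegree + ((i : ℕ) - q.natDegree) then
        q.coeff (q.natDegree + ((i : ℕ) - q.natDegree) - (j : ℕ)) else 0)

/-- The resultant of two integer polynomials, as the determinant of their Sylvester matrix. -/
noncomputable def resultant (p q : Polynomial ℤ) : ℤ :=
  (sylvesterMatrix p q).det

theorem resultant_cyclotomic_eq_one_of_ratio_not_prime_pow
    (m n : ℕ) (hn : 1 ≤ n) (hmn : n < m)
    (h : ∀ p r : ℕ, p.Prime → 0 < r → m ≠ n * p ^ r ∧ n ≠ m * p ^ r) :
    _root_.resultant (Polynomial.cyclotomic m ℤ) (Polynomial.cyclotomic n ℤ) = 1 ∨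
    _root_.resultant (Polynomial.cyclotomic m ℤ) (Polynomial.cyclotomic n ℤ) = -1 := by
  have hm : 0 < m := by omega
  set r : ℤ := _root_.resultant (Polynomial.cyclotomic m ℤ) (Polynomial.cyclotomic n ℤ) with hr
  have key : ∀ p : ℕ, p.Prime → ¬ ((p : ℤ) ∣ r) := by
    intro p pp hdvd
    haveI : Fact p.Prime := ⟨pp⟩
    have h0 : ((r : ℤ) : ZMod p) = 0 := by
      rw [ZMod.intCast_zmod_eq_zero_iff_dvd]; exact_mod_cast hdvd
    have heq : ((r : ℤ) : ZMod p)
        = (sylvAux (ZMod p) (Polynomial.cyclotomic m ℤ).natDegree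
            (Polynomial.cyclotomic n ℤ).natDegree
            (cyclotomic m (ZMod p)) (cyclotomic n (ZMod p))).det := by
      rw [hr]
      show ((sylvesterMatrix (Polynomial.cyclotomic m ℤ) (Polynomial.cyclotomic n ℤ)).det : ZMod p) = _
      have : sylvesterMatrix (Polynomial.cyclotomic m ℤ) (Polynomial.cyclotomic n ℤ)
          = sylvAux ℤ (Polynomial.cyclotomic m ℤ).natDegree
              (Polynomial.cyclotomic n ℤ).natDegree
              (Polynomial.cyclotomic m ℤ) (Polynomial.cyclotomic n ℤ) := rfl
      rw [this]
      rw [show ((sylvAux ℤ (Polynomial.cyclotomic m ℤ).natDegree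
            (Polynomial.cyclotomic n ℤ).natDegree
            (Polynomial.cyclotomic m ℤ) (Polynomial.cyclotomic n ℤ)).det : ZMod p)
          = (Int.castRingHom (ZMod p)) (sylvAux ℤ (Polynomial.cyclotomic m ℤ).natDegree
            (Polynomial.cyclotomic n ℤ).natDegree
            (Polynomial.cyclotomic m ℤ) (Polynomial.cyclotomic n ℤ)).det from rfl,
        RingHom.map_det, RingHom.mapMatrix_apply, sylvAux_map,
        map_cyclotomic_int, map_cyclotomic_int]
    rw [heq] at h0
    refine sylvAux_det_ne_zero ?_ ?_ (cyclotomic.monic m (ZMod p)) (cyclotomic.monic n (ZMod p))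
      ?_ ?_ ?_ h0
    · rw [natDegree_cyclotomic]; exact Nat.totient_pos.mpr hm
    · rw [natDegree_cyclotomic]; exact Nat.totient_pos.mpr (by omega)
    · rw [natDegree_cyclotomic, natDegree_cyclotomic]
    · rw [natDegree_cyclotomic, natDegree_cyclotomic]
    · exact cyclotomic_coprime_zmod p hm (by omega) (by omega) h
  have hna : r.natAbs = 1 := by
    by_contra hne
    obtain ⟨p, pp, hpd⟩ := Nat.exists_prime_and_dvd hne
    refine key p pp ?_
    exact dvd_trans (Int.natCast_dvd_natCast.mpr hpd) (Int.natAbs_dvd.mpr dvd_rfl)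
  rcases Int.natAbs_eq_iff.mp hna with h1 | h1
  · left; exact_mod_cast h1
  · right; exact_mod_cast h1
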